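/- Suppose (V_1,...,V_k) has Uniform[0,1] margins and for every nonempty I ⊆ {1,...,k} there is θ_I ≥ 1 with P(V_i ≤ t for all i ∈ I) = t^{θ_I} for t ∈ [0,1]. Then the variogram v = 1 - ((k+1)/(k-1))E[max_j V_j - min_j V_j] equals 1 - ((k+1)/(k-1))·(θ_{{1,...,k}}/(1+θ_{{1,...,k}}) - Σ_{∅≠I} (-1)^{|I|+1} θ_I/(1+θ_I)). -/

import Mathlib

open MeasureTheory ProbabilityTheory Set Finset

/-- `V` is uniformly distributed on `[0,1]`: its CDF on `[0,1]` is `t ↦ t`. -/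
def IsUniform01 {Ω : Type*} [MeasurableSpace Ω] (μ : Measure Ω) (V : Ω → ℝ) : Prop :=
  Measurable V ∧ ∀ t ∈ Icc (0 : ℝ) 1, μ {ω | V ω ≤ t} = ENNReal.ofReal t

section Aux

variable {ι : Type*} [DecidableEq ι]

/-- max over a finset, with junk value `0` for the empty set. -/
noncomputable def msup (f : ι → ℝ) (I : Finset ι) : ℝ :=
  if h : I.Nonempty then I.sup' h f else 0

lemma msup_of_nonempty {f : ι → ℝ} {I : Finset ι} (h : I.Nonempty) :
    msup f I = I.sup' h f := dif_pos h

lemma msup_empty (f : ι → ℝ) : msup f ∅ = 0 := dif_neg (by simp)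

lemma sup'_const_sup (c : ℝ) {I : Finset ι} (h : I.Nonempty) (f : ι → ℝ) :
    I.sup' h (fun i => c ⊔ f i) = c ⊔ I.sup' h f := by
  exact (Finset.comp_sup'_eq_sup'_comp (f := f) h (fun x => c ⊔ x)
    (fun x y => sup_sup_distrib_left c x y)).symm

lemma inf'_const_sup (c : ℝ) {I : Finset ι} (h : I.Nonempty) (f : ι → ℝ) :
    I.inf' h (fun i => c ⊔ f i) = c ⊔ I.inf' h f := by
  exact (Finset.apply_inf'_eq_inf'_comp (f := f) h (fun x => c ⊔ x)
    (fun x y => sup_inf_left c x y)).symm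

/-- Inclusion–exclusion for the minimum in terms of maxima over subsets. -/
lemma sum_powerset_neg_one_pow_msup {s : Finset ι} (hs : s.Nonempty) :
    ∀ f : ι → ℝ, ∑ I ∈ s.powerset, (-1 : ℝ) ^ (I.card + 1) * msup f I = s.inf' hs f := by
  induction hs using Finset.Nonempty.cons_induction with
  | singleton a =>
    intro f
    have hp : ({a} : Finset ι).powerset = {∅, {a}} := by
      ext I; simp [Finset.mem_powerset, Finset.subset_singleton_iff]
    rw [hp, Finset.sum_pair (Ne.symm (Finset.singleton_ne_empty a))]
    simp [msup_empty, msup_of_nonempty (Finset.singleton_nonempty a)]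
  | cons a s ha hs ih =>
    intro f
    have hsum : ∑ I ∈ (Finset.cons a s ha).powerset, (-1 : ℝ) ^ (I.card + 1) * msup f I
        = ∑ I ∈ (insert a s).powerset, (-1 : ℝ) ^ (I.card + 1) * msup f I := by
      rw [Finset.cons_eq_insert]
    rw [hsum, Finset.sum_powerset_insert ha, ih f]
    set g : ι → ℝ := fun i => f a ⊔ f i with hg
    have hterm : ∀ I ∈ s.powerset,
        (-1 : ℝ) ^ ((insert a I).card + 1) * msup f (insert a I) =
          -((-1 : ℝ) ^ (I.card + 1) * msup g I) +
            (if I = ∅ then f a else 0) := by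
      intro I hI
      have haI : a ∉ I := fun h => ha (Finset.mem_powerset.mp hI h)
      have hcard : (insert a I).card = I.card + 1 := Finset.card_insert_of_notMem haI
      rcases I.eq_empty_or_nonempty with rfl | hIne
      · rw [Finset.insert_empty]
        rw [msup_empty (ι := ι) g, msup_of_nonempty (Finset.singleton_nonempty a)]
        simp only [Finset.sup'_singleton, Finset.card_singleton, Finset.card_empty, if_true,
          eq_self_iff_true]
        ring_nf
      · have h1 : msup f (insert a I) = f a ⊔ I.sup' hIne f := by
          rw [← Finset.cons_eq_insert a I haI, msup_of_nonempty (Finset.cons_nonempty haI)]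
          exact Finset.sup'_cons hIne f
        have h2 : msup g I = f a ⊔ I.sup' hIne f := by
          rw [msup_of_nonempty hIne, hg]
          exact sup'_const_sup (f a) hIne f
        rw [h1, h2, hcard, if_neg hIne.ne_empty]
        ring
    rw [Finset.sum_congr rfl hterm, Finset.sum_add_distrib, Finset.sum_neg_distrib, ih g]
    have hif : ∑ I ∈ s.powerset, (if I = ∅ then f a else 0) = f a := by
      rw [Finset.sum_ite_eq' s.powerset (∅ : Finset ι) (fun _ => f a)]
      simp
    have hinfg : s.inf' hs g = f a ⊔ s.inf' hs f := inf'_const_sup (f a) hs f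
    have hins : (Finset.cons a s ha).inf' (Finset.cons_nonempty ha) f
        = f a ⊓ s.inf' hs f := Finset.inf'_cons hs f
    rw [hif, hinfg, hins]
    have h := min_add_max (f a) (s.inf' hs f)
    linarith

end Aux

section Exp

variable {Ω : Type*} [MeasurableSpace Ω] (μ : Measure Ω) [IsProbabilityMeasure μ]

lemma ae_bounds_of_cdf {X : Ω → ℝ} (hX : Measurable X)
    (h0 : μ {ω | X ω ≤ 0} = 0) (h1 : μ {ω | X ω ≤ 1} = 1) :
    (∀ᵐ ω ∂μ, 0 ≤ X ω) ∧ (∀ᵐ ω ∂μ, X ω ≤ 1) := by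
  constructor
  · rw [ae_iff]
    refine measure_mono_null ?_ h0
    intro ω hω
    simp only [Set.mem_setOf_eq, not_le] at hω ⊢
    exact hω.le
  · rw [ae_iff]
    have hms : MeasurableSet {ω | X ω ≤ 1} := hX measurableSet_Iic
    have : {a | ¬ X a ≤ 1} = {ω | X ω ≤ 1}ᶜ := by ext ω; simp
    rw [this, measure_compl hms (measure_ne_top μ _), h1, measure_univ, tsub_self]

lemma integrable_of_cdf_bounds {X : Ω → ℝ} (hX : Measurable X)
    (h0 : ∀ᵐ ω ∂μ, 0 ≤ X ω) (h1 : ∀ᵐ ω ∂μ, X ω ≤ 1) :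
    Integrable X μ := by
  refine (integrable_const (1 : ℝ)).mono' hX.aestronglyMeasurable ?_
  filter_upwards [h0, h1] with ω hω0 hω1
  rw [Real.norm_eq_abs, abs_of_nonneg hω0]
  exact hω1

lemma cdf_endpoints {X : Ω → ℝ} {θ : ℝ} (hθ : 1 ≤ θ)
    (hcdf : ∀ t ∈ Icc (0 : ℝ) 1, μ {ω | X ω ≤ t} = ENNReal.ofReal (t ^ θ)) :
    μ {ω | X ω ≤ 0} = 0 ∧ μ {ω | X ω ≤ 1} = 1 := by
  constructor
  · rw [hcdf 0 ⟨le_refl 0, zero_le_one⟩, Real.zero_rpow (by linarith), ENNReal.ofReal_zero]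
  · rw [hcdf 1 ⟨zero_le_one, le_refl 1⟩, Real.one_rpow, ENNReal.ofReal_one]

/-- Expectation of a random variable with CDF `t ↦ t^θ` on `[0,1]`. -/
lemma integral_of_cdf_rpow {X : Ω → ℝ} (hX : Measurable X) {θ : ℝ} (hθ : 1 ≤ θ)
    (hcdf : ∀ t ∈ Icc (0 : ℝ) 1, μ {ω | X ω ≤ t} = ENNReal.ofReal (t ^ θ)) :
    ∫ ω, X ω ∂μ = θ / (1 + θ) := by
  obtain ⟨h0, h1⟩ := cdf_endpoints μ hθ hcdf
  obtain ⟨hnn, hle1⟩ := ae_bounds_of_cdf μ hX h0 h1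
  have hint : Integrable X μ := integrable_of_cdf_bounds μ hX hnn hle1
  rw [hint.integral_eq_integral_meas_lt hnn]
  have hms1 : MeasurableSet {ω | X ω ≤ 1} := hX measurableSet_Iic
  have key : ∀ t ∈ Ioi (0 : ℝ),
      ENNReal.toReal (μ {a | t < X a}) = (Ioc (0 : ℝ) 1).indicator (fun t => 1 - t ^ θ) t := by
    intro t ht
    simp only [Set.mem_Ioi] at ht
    by_cases hle : t ≤ 1
    · have htmem : t ∈ Icc (0 : ℝ) 1 := ⟨ht.le, hle⟩
      have hms : MeasurableSet {ω | X ω ≤ t} := hX measurableSet_Iic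
      have hcompl : {a | t < X a} = {ω | X ω ≤ t}ᶜ := by ext ω; simp
      have hrle1 : t ^ θ ≤ 1 := Real.rpow_le_one ht.le hle (by linarith)
      have hrnn : 0 ≤ t ^ θ := Real.rpow_nonneg ht.le θ
      rw [hcompl, measure_compl hms (measure_ne_top μ _), measure_univ,
        hcdf t htmem, Set.indicator_of_mem (Set.mem_Ioc.mpr ⟨ht, hle⟩)]
      rw [← ENNReal.ofReal_one, ← ENNReal.ofReal_sub _ hrnn,
        ENNReal.toReal_ofReal (by linarith)]
    · push_neg at hle
      have hsub : {a | t < X a} ⊆ {ω | X ω ≤ 1}ᶜ := by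
        intro ω hω
        simp only [Set.mem_setOf_eq, Set.mem_compl_iff, not_le] at hω ⊢
        linarith
      have hnull : μ {ω | X ω ≤ 1}ᶜ = 0 := by
        rw [measure_compl hms1 (measure_ne_top μ _), h1, measure_univ, tsub_self]
      rw [measure_mono_null hsub hnull,
        Set.indicator_of_notMem (by simp [Set.mem_Ioc]; intro h; linarith)]
      simp
  rw [setIntegral_congr_fun (g := (Ioc (0 : ℝ) 1).indicator (fun t => 1 - t ^ θ)) measurableSet_Ioi (fun t ht => by rw [measureReal_def]; exact key t ht),
    setIntegral_indicator measurableSet_Ioc]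
  have hset : Ioi (0 : ℝ) ∩ Ioc (0 : ℝ) 1 = Ioc (0 : ℝ) 1 := by
    ext x; simp only [Set.mem_inter_iff, Set.mem_Ioi, Set.mem_Ioc]; tauto
  rw [hset, ← intervalIntegral.integral_of_le (zero_le_one)]
  have hi1 : IntervalIntegrable (fun _ : ℝ => (1 : ℝ)) volume 0 1 :=
    intervalIntegrable_const
  have hi2 : IntervalIntegrable (fun t : ℝ => t ^ θ) volume 0 1 :=
    intervalIntegral.intervalIntegrable_rpow (Or.inl (by linarith))
  rw [intervalIntegral.integral_sub hi1 hi2, intervalIntegral.integral_const,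
    integral_rpow (Or.inl (by linarith))]
  rw [Real.one_rpow, Real.zero_rpow (ne_of_gt (by linarith : (0:ℝ) < θ + 1)), smul_eq_mul]
  have : (1 : ℝ) + θ ≠ 0 := by linarith
  norm_num
  rw [eq_div_iff (by linarith : (1:ℝ)+θ ≠ 0), sub_mul, add_comm (1:ℝ) θ,
    mul_comm ((θ+1)⁻¹) (θ+1), mul_inv_cancel₀ (by linarith : (θ:ℝ)+1 ≠ 0)]
  ring

end Exp

theorem variogram_via_extremal_coefficients {Ω : Type*} [MeasurableSpace Ω] (μ : Measure Ω)
    [IsProbabilityMeasure μ] (k : ℕ) (hk : 2 ≤ k) (V : Fin k → Ω → ℝ)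
    (hunif : ∀ j, IsUniform01 μ (V j))
    (θ : Finset (Fin k) → ℝ) (hθ : ∀ I, 1 ≤ θ I)
    (hdiag : ∀ I : Finset (Fin k), I.Nonempty → ∀ t ∈ Icc (0 : ℝ) 1,
      μ {ω | ∀ i ∈ I, V i ω ≤ t} = ENNReal.ofReal (t ^ θ I)) :
    haveI : NeZero k := ⟨by omega⟩
    1 - ((k + 1 : ℝ) / (k - 1)) * ∫ ω, ((⨆ j, V j ω) - ⨅ j, V j ω) ∂μ =
      1 - ((k + 1 : ℝ) / (k - 1)) *
        (θ Finset.univ / (1 + θ Finset.univ) -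
          ∑ I : {I : Finset (Fin k) // I.Nonempty},
            (-1 : ℝ) ^ (I.1.card + 1) * (θ I.1 / (1 + θ I.1))) := by
  haveI : NeZero k := ⟨by omega⟩
  -- the "max over I" random variables
  set M : Finset (Fin k) → Ω → ℝ := fun I ω => msup (fun i => V i ω) I with hM
  have hMmeas : ∀ I : Finset (Fin k), Measurable (M I) := by
    intro I
    rcases I.eq_empty_or_nonempty with rfl | hI
    · simpa [hM, msup_empty] using measurable_const (a := (0 : ℝ))
    · have hm : Measurable (I.sup' hI V) :=
        Finset.measurable_sup' hI (fun i _ => (hunif i).1)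
      have heq : M I = I.sup' hI V := by
        funext ω
        simp only [hM, msup_of_nonempty hI]
        exact (Finset.sup'_apply hI V ω).symm
      rw [heq]; exact hm
  have hMcdf : ∀ (I : Finset (Fin k)) (hI : I.Nonempty), ∀ t ∈ Icc (0 : ℝ) 1,
      μ {ω | M I ω ≤ t} = ENNReal.ofReal (t ^ θ I) := by
    intro I hI t ht
    have hset : {ω | M I ω ≤ t} = {ω | ∀ i ∈ I, V i ω ≤ t} := by
      ext ω
      simp [hM, msup_of_nonempty hI, Finset.sup'_le_iff]
    rw [hset]
    exact hdiag I hI t ht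
  have hMint : ∀ (I : Finset (Fin k)) (hI : I.Nonempty), Integrable (M I) μ := by
    intro I hI
    obtain ⟨h0, h1⟩ := cdf_endpoints μ (hθ I) (hMcdf I hI)
    obtain ⟨hnn, hle1⟩ := ae_bounds_of_cdf μ (hMmeas I) h0 h1
    exact integrable_of_cdf_bounds μ (hMmeas I) hnn hle1
  have hMval : ∀ (I : Finset (Fin k)) (hI : I.Nonempty),
      ∫ ω, M I ω ∂μ = θ I / (1 + θ I) :=
    fun I hI => integral_of_cdf_rpow μ (hMmeas I) (hθ I) (hMcdf I hI)
  have huniv : (Finset.univ : Finset (Fin k)).Nonempty := Finset.univ_nonempty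
  -- the min as a signed sum of the M I
  have hmin : ∀ ω, (⨅ j, V j ω) =
      ∑ I ∈ (Finset.univ : Finset (Fin k)).powerset, (-1 : ℝ) ^ (I.card + 1) * M I ω := by
    intro ω
    rw [← Finset.inf'_univ_eq_ciInf (fun j => V j ω)]
    exact (sum_powerset_neg_one_pow_msup huniv (fun i => V i ω)).symm
  have hmax : ∀ ω, (⨆ j, V j ω) = M Finset.univ ω := by
    intro ω
    simp only [hM, msup_of_nonempty huniv, Finset.sup'_univ_eq_ciSup]
  -- integrability of each signed term
  have hterm_int : ∀ I ∈ (Finset.univ : Finset (Fin k)).powerset,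
      Integrable (fun ω => (-1 : ℝ) ^ (I.card + 1) * M I ω) μ := by
    intro I _
    rcases I.eq_empty_or_nonempty with rfl | hI
    · simpa [hM, msup_empty] using (integrable_const (0 : ℝ))
    · exact (hMint I hI).const_mul _
  have hmin_int : Integrable (fun ω => ⨅ j, V j ω) μ := by
    have : (fun ω => ⨅ j, V j ω) = fun ω =>
        ∑ I ∈ (Finset.univ : Finset (Fin k)).powerset, (-1 : ℝ) ^ (I.card + 1) * M I ω :=
      funext hmin
    rw [this]
    exact integrable_finset_sum _ hterm_int
  have hmax_int : Integrable (fun ω => ⨆ j, V j ω) μ := by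
    have : (fun ω => ⨆ j, V j ω) = M Finset.univ := funext hmax
    rw [this]
    exact hMint _ huniv
  -- compute the integral of the min
  have hmin_val : ∫ ω, (⨅ j, V j ω) ∂μ =
      ∑ I : {I : Finset (Fin k) // I.Nonempty},
        (-1 : ℝ) ^ (I.1.card + 1) * (θ I.1 / (1 + θ I.1)) := by
    calc ∫ ω, (⨅ j, V j ω) ∂μ
        = ∫ ω, ∑ I ∈ (Finset.univ : Finset (Fin k)).powerset,
            (-1 : ℝ) ^ (I.card + 1) * M I ω ∂μ := by
          congr 1; exact funext hmin
      _ = ∑ I ∈ (Finset.univ : Finset (Fin k)).powerset,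
            ∫ ω, (-1 : ℝ) ^ (I.card + 1) * M I ω ∂μ :=
          integral_finset_sum _ hterm_int
      _ = ∑ I ∈ (Finset.univ : Finset (Fin k)).powerset,
            (-1 : ℝ) ^ (I.card + 1) * ∫ ω, M I ω ∂μ := by
          refine Finset.sum_congr rfl fun I _ => ?_
          exact integral_const_mul _ _
      _ = ∑ I ∈ Finset.univ.filter (fun I : Finset (Fin k) => I.Nonempty),
            (-1 : ℝ) ^ (I.card + 1) * ∫ ω, M I ω ∂μ := by
          rw [Finset.powerset_univ]
          refine (Finset.sum_subset (Finset.filter_subset _ _) ?_).symm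
          intro I _ hI
          simp only [Finset.mem_filter, Finset.mem_univ, true_and] at hI
          rw [Finset.not_nonempty_iff_eq_empty] at hI
          subst hI
          simp [hM, msup_empty]
      _ = ∑ I : {I : Finset (Fin k) // I.Nonempty},
            (-1 : ℝ) ^ (I.1.card + 1) * (θ I.1 / (1 + θ I.1)) := by
          rw [Finset.sum_subtype (Finset.univ.filter (fun I : Finset (Fin k) => I.Nonempty))
            (p := fun I : Finset (Fin k) => I.Nonempty)
            (fun I => by simp) (fun I => (-1 : ℝ) ^ (I.card + 1) * ∫ ω, M I ω ∂μ)]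
          refine Finset.sum_congr rfl fun I _ => ?_
          rw [hMval I.1 I.2]
  have hmax_val : ∫ ω, (⨆ j, V j ω) ∂μ = θ Finset.univ / (1 + θ Finset.univ) := by
    calc ∫ ω, (⨆ j, V j ω) ∂μ = ∫ ω, M Finset.univ ω ∂μ := by congr 1; exact funext hmax
      _ = θ Finset.univ / (1 + θ Finset.univ) := hMval _ huniv
  have hsub : ∫ ω, ((⨆ j, V j ω) - ⨅ j, V j ω) ∂μ =
      (∫ ω, (⨆ j, V j ω) ∂μ) - ∫ ω, (⨅ j, V j ω) ∂μ :=
    integral_sub hmax_int hmin_int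
  rw [hsub, hmax_val, hmin_val]
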